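/- Let f : ℝⁿ → ℝᵐ be continuous and linearly open around x̄ with constant α > 0, i.e. there exist neighbourhoods U of x̄ and V of f(x̄) such that B°(f(x), αr) ∩ V ⊆ f(B°(x, r)) for all x ∈ U and r > 0. Then for every α' ∈ (0, α), f is α'-covering at x̄: for every ε > 0 there exists r ∈ (0, ε] with B̄(f(x̄), α'r) ⊆ f(B̄(x̄, r)). Consequently lop(f, x̄) ≤ cov(f, x̄), where cov(f, x̄) is the supremum of all α' > 0 for which f is α'-covering at x̄. -/

import Mathlib

open Metric Set
open scoped ENNReal NNReal

noncomputable section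

variable {E F : Type*} [NormedAddCommGroup E] [NormedAddCommGroup F]

/-- `f` is `α`-covering at `x`: for every `ε > 0` there is `r ∈ (0, ε]` with
`B̄(f x, α r) ⊆ f (B̄(x, r))`. -/
def AlphaCoveringAt (f : E → F) (x : E) (α : ℝ) : Prop :=
  ∀ ε > (0:ℝ), ∃ r : ℝ, 0 < r ∧ r ≤ ε ∧
    closedBall (f x) (α * r) ⊆ f '' closedBall x r

/-- The covering bound `cov(f, x)`: supremum of all `α > 0` for which `f` is
`α`-covering at `x`. -/
def covBound (f : E → F) (x : E) : ℝ≥0∞ :=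
  ⨆ (α : ℝ≥0) (_ : 0 < α ∧ AlphaCoveringAt f x (α : ℝ)), (α : ℝ≥0∞)

/-- `f` is linearly open around `xb` with constant `α`. -/
def LinOpenWith (f : E → F) (xb : E) (α : ℝ) : Prop :=
  ∃ U ∈ nhds xb, ∃ V ∈ nhds (f xb), ∀ x ∈ U, ∀ r > (0:ℝ),
    ball (f x) (α * r) ∩ V ⊆ f '' ball x r

/-- The exact linear openness bound `lop(f, xb)` (`0` if no constant works). -/
def lopBound (f : E → F) (xb : E) : ℝ≥0∞ :=
  ⨆ (α : ℝ≥0) (_ : 0 < α ∧ LinOpenWith f xb (α : ℝ)), (α : ℝ≥0∞)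

/-- `ℓ` is a Lipschitz constant of `h` on some neighbourhood of `xb`. -/
def IsLipConstAround (h : E → F) (xb : E) (ℓ : ℝ) : Prop :=
  ∃ U ∈ nhds xb, ∀ x₁ ∈ U, ∀ x₂ ∈ U, ‖h x₁ - h x₂‖ ≤ ℓ * ‖x₁ - x₂‖

/-- `lip(h, xb)`: infimum of all `ℓ > 0` which are Lipschitz constants of `h`
on some neighbourhood of `xb` (`∞` if `h` is not locally Lipschitz at `xb`). -/
def lipBound (h : E → F) (xb : E) : ℝ≥0∞ :=
  ⨅ (ℓ : ℝ≥0) (_ : 0 < ℓ ∧ IsLipConstAround h xb (ℓ : ℝ)), (ℓ : ℝ≥0∞)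

/-- `β` is a metric injectivity constant for `g` on some closed ball around `xb`. -/
def IsInjConstAround (g : E → F) (xb : E) (β : ℝ) : Prop :=
  ∃ δ > (0:ℝ), ∀ x₁ ∈ closedBall xb δ, ∀ x₂ ∈ closedBall xb δ,
    β * ‖x₁ - x₂‖ ≤ ‖g x₁ - g x₂‖

/-- `g` is metrically injective around `xb`. -/
def MetricallyInjectiveAround (g : E → F) (xb : E) : Prop :=
  ∃ β > (0:ℝ), IsInjConstAround g xb β

/-- The metric injection bound `inj(g, xb)`: supremum of all valid `β > 0`. -/
def injBound (g : E → F) (xb : E) : ℝ≥0∞ :=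
  ⨆ (β : ℝ≥0) (_ : 0 < β ∧ IsInjConstAround g xb (β : ℝ)), (β : ℝ≥0∞)

/-- `h` is a strict `μ`-estimator of `f` at `xb`: `h xb = f xb` and
`lip(f - h, xb) ≤ μ`. -/
def IsStrictEstimator (f h : E → F) (xb : E) (μ : ℝ≥0) : Prop :=
  h xb = f xb ∧ lipBound (fun x => f x - h x) xb ≤ (μ : ℝ≥0∞)

/-- `g` is strongly (metrically) regular around `xb`: it is linearly open around
`xb` and the set-valued inverse `g⁻¹` has a single-valued graphical localization
around `(g xb, xb)`. -/
def StronglyRegularAround (g : E → F) (xb : E) : Prop :=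
  (∃ α > (0:ℝ), LinOpenWith g xb α) ∧
  ∃ V ∈ nhds (g xb), ∃ U ∈ nhds xb, ∀ y ∈ V, ∃ x : E, g ⁻¹' {y} ∩ U = {x}

/-- A continuous map linearly open around `xb` with constant `α` is
`α'`-covering at `xb` for every `α' ∈ (0, α)`; consequently
`lop(f, xb) ≤ cov(f, xb)`. -/
lemma linOpen_alphaCovering (f : E → F) (xb : E) {α α' : ℝ}
    (hα' : 0 < α') (h' : α' < α) (hlo : LinOpenWith f xb α) :
    AlphaCoveringAt f xb α' := by
  obtain ⟨U, hU, V, hV, hlin⟩ := hlo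
  have hxU : xb ∈ U := mem_of_mem_nhds hU
  obtain ⟨δ, hδ, hδV⟩ := Metric.mem_nhds_iff.mp hV
  have hα : 0 < α := hα'.trans h'
  intro ε hε
  refine ⟨min ε (δ / (2 * α)), by positivity, min_le_left _ _, ?_⟩
  set r := min ε (δ / (2 * α)) with hrdef
  have hr : 0 < r := by positivity
  have hrle : r ≤ δ / (2 * α) := min_le_right _ _
  have hαr : α * r < δ := by
    have h1 : α * r ≤ δ / 2 := by
      calc α * r ≤ α * (δ / (2 * α)) := by nlinarith
        _ = δ / 2 := by field_simp
    linarith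
  intro y hy
  have hyd : dist y (f xb) ≤ α' * r := mem_closedBall.mp hy
  have hylt : dist y (f xb) < α * r := lt_of_le_of_lt hyd (by nlinarith)
  have hy' : y ∈ ball (f xb) (α * r) ∩ V :=
    ⟨mem_ball.mpr hylt, hδV (mem_ball.mpr (hylt.trans hαr))⟩
  exact image_mono (f := f) ball_subset_closedBall (hlin xb hxU r hr hy')

theorem stmt14 (n m : ℕ)
    (f : EuclideanSpace ℝ (Fin n) → EuclideanSpace ℝ (Fin m))
    (xb : EuclideanSpace ℝ (Fin n)) (α : ℝ) (hα : 0 < α)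
    (hcont : Continuous f)
    (hlo : LinOpenWith f xb α) :
    (∀ α' : ℝ, 0 < α' → α' < α → AlphaCoveringAt f xb α') ∧
    lopBound f xb ≤ covBound f xb := by
  constructor
  · exact fun α' h1 h2 => linOpen_alphaCovering f xb h1 h2 hlo
  · refine iSup_le fun β => iSup_le fun hβ => ?_
    obtain ⟨hβ0, hβlo⟩ := hβ
    refine le_of_forall_lt ?_
    intro c hc
    have hc' : c < (β : ℝ≥0∞) := hc
    obtain ⟨γ, hγ1, hγ2⟩ := exists_between hc'
    have hγne : γ ≠ ⊤ := ne_top_of_lt hγ2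
    lift γ to ℝ≥0 using hγne
    have hγβ : (γ : ℝ) < (β : ℝ) := by exact_mod_cast hγ2
    by_cases hγ0 : γ = 0
    · subst hγ0
      simp at hγ1
    · have hγpos : 0 < (γ : ℝ) := by positivity
      have hcov : AlphaCoveringAt f xb (γ : ℝ) :=
        linOpen_alphaCovering f xb hγpos hγβ hβlo
      have : (γ : ℝ≥0∞) ≤ covBound f xb := by
        refine le_trans ?_ (le_iSup _ γ)
        exact le_iSup (fun _ : 0 < γ ∧ AlphaCoveringAt f xb (γ : ℝ) => (γ : ℝ≥0∞))
          ⟨pos_iff_ne_zero.mpr hγ0, hcov⟩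
      exact lt_of_lt_of_le hγ1 this
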